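/- Let 𝔧 be a strongly stable ideal in R whose sous-escalier N(𝔧) is finite (i.e., 𝔧 is Artinian), and let 𝔊 be a [𝔧,m]-marked set for some m ≥ reg(𝔧) − 1. Then for every monomial x^β ∈ 𝔧, the 𝔊_∗-reduction of x^β terminates at a polynomial g_β with supp(g_β) ⊆ N(𝔧)_{≤ reg(𝔧) − 1}. Consequently, for m ≥ sat(𝔧), 𝔊 is a [𝔧, sat(𝔧)−1]-marked basis if and only if x_i f_α reduces to 0 by 𝔊_∗ for every f_α ∈ 𝔊 and every x_i > min(x^α). -/

import Mathlib

open MvPolynomial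

namespace Paper

/-- Monomials (exponent vectors) in `N` variables. -/
abbrev Mon (N : ℕ) := Fin N →₀ ℕ

variable {N : ℕ}

/-- Total degree of a monomial. -/
def mdeg (u : Mon N) : ℕ := u.sum fun _ e => e

/-- `BorelStep a b` : `b` is obtained from `a` by one increasing elementary move,
i.e. `x^a · x_j = x^b · x_i` with `i < j`. -/
def BorelStep (a b : Mon N) : Prop :=
  ∃ i j : Fin N, i < j ∧ a + Finsupp.single j 1 = b + Finsupp.single i 1

/-- `BorelLt a b` : `a <_B b`, i.e. `b` is obtained from `a` by a nonempty
sequence of increasing elementary moves. -/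
def BorelLt (a b : Mon N) : Prop := Relation.TransGen BorelStep a b

/-- A (combinatorially encoded) monomial ideal: a set of monomials closed
under multiplication by monomials. -/
def MonIdeal (J : Set (Mon N)) : Prop := ∀ u ∈ J, ∀ d : Mon N, u + d ∈ J

/-- A strongly stable monomial ideal. -/
def StronglyStable (J : Set (Mon N)) : Prop :=
  MonIdeal J ∧ ∀ b ∈ J, ∀ a, BorelLt b a → a ∈ J

/-- The minimal monomial basis `B_J` of a monomial ideal. -/
def MinBasis (J : Set (Mon N)) : Set (Mon N) :=
  {u | u ∈ J ∧ ∀ v ∈ J, v ≤ u → v = u}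

/-- `min(x^a) ≥ max(x^h)`. -/
def StarCond (a h : Mon N) : Prop :=
  ∀ i j : Fin N, a i ≠ 0 → h j ≠ 0 → j ≤ i


variable (K : Type) [Field K]

/-- The monomial `x^u` as a polynomial. -/
noncomputable def mono {N : ℕ} (u : Mon N) : MvPolynomial (Fin N) K :=
  MvPolynomial.monomial u (1 : K)

/-- The (actual) monomial ideal of `S` spanned by a set of monomials. -/
noncomputable def idealOf {N : ℕ} (J : Set (Mon N)) : Ideal (MvPolynomial (Fin N) K) :=
  Ideal.span (mono K '' J)

/-- The irrelevant maximal ideal `(x_0, …, x_n)`. -/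
noncomputable def irrel (N : ℕ) : Ideal (MvPolynomial (Fin N) K) :=
  Ideal.span (Set.range MvPolynomial.X)

/-- The saturation `I^sat = ⋃_j (I : (x_0,…,x_n)^j)`. -/
noncomputable def satIdeal {N : ℕ} (I : Ideal (MvPolynomial (Fin N) K)) :
    Ideal (MvPolynomial (Fin N) K) :=
  ⨆ k : ℕ, Submodule.colon I ((irrel K N ^ k : Ideal (MvPolynomial (Fin N) K)) : Set (MvPolynomial (Fin N) K))

/-- The satiety of a homogeneous ideal: the smallest `m` such that
`I_t = (I^sat)_t` for all `t ≥ m`. -/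
noncomputable def satiety {N : ℕ} (I : Ideal (MvPolynomial (Fin N) K)) : ℕ :=
  sInf {m | ∀ t, m ≤ t → ∀ p : MvPolynomial (Fin N) K,
    p.IsHomogeneous t → (p ∈ I ↔ p ∈ satIdeal K I)}

/-- The saturation of a combinatorial monomial ideal. -/
def msat {N : ℕ} (J : Set (Mon N)) : Set (Mon N) :=
  {u | ∃ k : ℕ, ∀ d : Mon N, mdeg d = k → u + d ∈ J}

/-- The satiety of a combinatorial monomial ideal. -/
noncomputable def msatiety {N : ℕ} (J : Set (Mon N)) : ℕ :=
  sInf {m | ∀ u : Mon N, m ≤ mdeg u → (u ∈ J ↔ u ∈ msat J)}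

/-- A non-homogeneous `𝔧`-marked set: marked polynomials `f_α` with pairwise
distinct head terms forming `B_𝔧` and tails supported outside `𝔧`. -/
def NHMarkedSet {N : ℕ} (𝔧 : Set (Mon N)) (f : Mon N → MvPolynomial (Fin N) K) : Prop :=
  ∀ α ∈ MinBasis 𝔧,
    MvPolynomial.coeff α (f α) = 1 ∧
    ∀ u ∈ (f α).support, u ≠ α → u ∉ 𝔧

/-- One step of the `𝔊_∗`-reduction: the monomial `x^γ = x^α ∗_𝔧 x^η` of the
support of `g` is replaced by `x^η · T(f_α)`. -/
def RStep {N : ℕ} (𝔧 : Set (Mon N)) (f : Mon N → MvPolynomial (Fin N) K)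
    (g g₁ : MvPolynomial (Fin N) K) : Prop :=
  ∃ γ α η : Mon N, γ ∈ g.support ∧ γ ∈ 𝔧 ∧ α ∈ MinBasis 𝔧 ∧ γ = α + η ∧
    StarCond α η ∧
    g₁ = g - MvPolynomial.coeff γ g • (mono K η * f α)

/-- The `𝔊_∗`-reduction relation (reflexive-transitive closure of `RStep`). -/
def Reduces {N : ℕ} (𝔧 : Set (Mon N)) (f : Mon N → MvPolynomial (Fin N) K) :
    MvPolynomial (Fin N) K → MvPolynomial (Fin N) K → Prop :=
  Relation.ReflTransGen (RStep K 𝔧 f)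

/-- `g` is reduced: `supp(g) ∩ 𝔧 = ∅`. -/
def IsReducedPoly {N : ℕ} (𝔧 : Set (Mon N)) (g : MvPolynomial (Fin N) K) : Prop :=
  ∀ u ∈ g.support, u ∉ 𝔧

/-- A `[𝔧,m]`-marked set: a n.h. `𝔧`-marked set whose tails are supported in
`N(𝔧)_{≤ max{m,|α|}}`. -/
def JmMarkedSet {N : ℕ} (𝔧 : Set (Mon N)) (m : ℕ)
    (f : Mon N → MvPolynomial (Fin N) K) : Prop :=
  ∀ α ∈ MinBasis 𝔧,
    MvPolynomial.coeff α (f α) = 1 ∧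
    ∀ u ∈ (f α).support, u ≠ α → (u ∉ 𝔧 ∧ mdeg u ≤ max m (mdeg α))

/-- The ideal `(𝔊)` generated by a marked set. -/
noncomputable def idealG {N : ℕ} (𝔧 : Set (Mon N))
    (f : Mon N → MvPolynomial (Fin N) K) : Ideal (MvPolynomial (Fin N) K) :=
  Ideal.span (f '' MinBasis 𝔧)

/-- A `[𝔧,m]`-completion of `𝔊`: marked polynomials `f_β ∈ (𝔊)` with pairwise
distinct head terms the monomials of `𝔧_{≤m} \ B_𝔧` and tails in `N(𝔧)_{≤m}`. -/
def IsCompletion {N : ℕ} (𝔧 : Set (Mon N)) (m : ℕ)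
    (f h : Mon N → MvPolynomial (Fin N) K) : Prop :=
  ∀ β : Mon N, β ∈ 𝔧 → mdeg β ≤ m → β ∉ MinBasis 𝔧 →
    h β ∈ idealG K 𝔧 f ∧
    MvPolynomial.coeff β (h β) = 1 ∧
    ∀ u ∈ (h β).support, u ≠ β → (u ∉ 𝔧 ∧ mdeg u ≤ m)

/-- `g'` is a `[𝔧,m]`-reduced form of `g` modulo `(𝔊)`. -/
def IsReducedForm {N : ℕ} (𝔧 : Set (Mon N)) (m : ℕ)
    (f : Mon N → MvPolynomial (Fin N) K)
    (g g' : MvPolynomial (Fin N) K) : Prop :=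
  (∀ u ∈ g'.support, u ∉ 𝔧 ∧ mdeg u ≤ max m g.totalDegree) ∧
  g - g' ∈ idealG K 𝔧 f

/-- `R_{≤ t}`: the `K`-subspace of polynomials of degree at most `t`. -/
noncomputable def degLE (N : ℕ) (t : ℕ) : Submodule K (MvPolynomial (Fin N) K) where
  carrier := {g | ∀ u ∈ g.support, mdeg u ≤ t}
  zero_mem' := by simp
  add_mem' := by
    intro a b ha hb u hu
    rcases Finset.mem_union.mp (MvPolynomial.support_add hu) with h | h
    · exact ha u h
    · exact hb u h
  smul_mem' := by
    intro c a ha u hu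
    exact ha u (MvPolynomial.support_smul hu)

/-- `⟨N(𝔧)_{≤t}⟩`: the `K`-span of the monomials outside `𝔧` of degree `≤ t`. -/
noncomputable def spanNLE {N : ℕ} (𝔧 : Set (Mon N)) (t : ℕ) :
    Submodule K (MvPolynomial (Fin N) K) :=
  Submodule.span K (mono K '' {u : Mon N | u ∉ 𝔧 ∧ mdeg u ≤ t})

/-- `(𝔊)_{≤t}`: the `K`-subspace of elements of `(𝔊)` of degree `≤ t`. -/
noncomputable def GleSub {N : ℕ} (𝔧 : Set (Mon N))
    (f : Mon N → MvPolynomial (Fin N) K) (t : ℕ) :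
    Submodule K (MvPolynomial (Fin N) K) :=
  (idealG K 𝔧 f).restrictScalars K ⊓ degLE K N t

/-- A `[𝔧,m]`-marked basis: a `[𝔧,m]`-marked set with
`R_{≤t} = ⟨N(𝔧)_{≤t}⟩ ⊕ (𝔊)_{≤t}` for all `t ≥ m`. -/
def JmMarkedBasis {N : ℕ} (𝔧 : Set (Mon N)) (m : ℕ)
    (f : Mon N → MvPolynomial (Fin N) K) : Prop :=
  JmMarkedSet K 𝔧 m f ∧
  ∀ t, m ≤ t →
    Disjoint (spanNLE K 𝔧 t) (GleSub K 𝔧 f t) ∧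
    spanNLE K 𝔧 t ⊔ GleSub K 𝔧 f t = degLE K N t

/-- The regularity of a strongly stable monomial ideal: the maximal degree of
a minimal generator. -/
noncomputable def regC {N : ℕ} (𝔧 : Set (Mon N)) : ℕ :=
  sSup (mdeg '' MinBasis 𝔧)

/-- The satiety of a strongly stable monomial ideal in `K[x_1,…,x_{n+1}]`:
the maximal degree of a minimal generator divisible by the smallest
variable `x_1` (the variable of index `0`). -/
noncomputable def satC {n : ℕ} (𝔧 : Set (Mon (n + 1))) : ℕ :=
  sSup (mdeg '' {b | b ∈ MinBasis 𝔧 ∧ b 0 ≠ 0})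

section Aux

variable {n : ℕ} {𝔧 : Set (Mon (n + 1))}

lemma mdeg_eq_sum (u : Mon (n+1)) : mdeg u = ∑ i, u i :=
  Finsupp.sum_fintype _ _ (fun _ => rfl)

lemma mdeg_add (u v : Mon (n+1)) : mdeg (u + v) = mdeg u + mdeg v := by
  simp [mdeg_eq_sum, Finsupp.add_apply, Finset.sum_add_distrib]

lemma mdeg_single (j : Fin (n+1)) (k : ℕ) : mdeg (Finsupp.single j k) = k := by
  classical
  simp [mdeg_eq_sum, Finsupp.single_apply]

lemma mdeg_zero : mdeg (0 : Mon (n+1)) = 0 := by simp [mdeg_eq_sum]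

lemma mdeg_eq_zero {u : Mon (n+1)} (h : mdeg u = 0) : u = 0 := by
  rw [mdeg_eq_sum] at h
  ext i
  exact (Finset.sum_eq_zero_iff.1 h) i (Finset.mem_univ i)

lemma mdeg_mono {u v : Mon (n+1)} (h : u ≤ v) : mdeg u ≤ mdeg v := by
  rw [mdeg_eq_sum, mdeg_eq_sum]
  exact Finset.sum_le_sum fun i _ => Finsupp.le_def.1 h i

lemma mdeg_tsub {u v : Mon (n+1)} (h : v ≤ u) : mdeg (u - v) = mdeg u - mdeg v := by
  have h2 : mdeg (u - v) + mdeg v = mdeg u := by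
    rw [← mdeg_add, tsub_add_cancel_of_le h]
  omega

lemma borelChain (u : Mon (n+1)) :
    u = Finsupp.single 0 (mdeg u) ∨ BorelLt (Finsupp.single 0 (mdeg u)) u := by
  classical
  generalize ht : mdeg u - u 0 = t
  induction t using Nat.strong_induction_on generalizing u with
  | _ t ih =>
  have hsum : u 0 + ∑ i ∈ Finset.univ.erase 0, u i = mdeg u := by
    rw [mdeg_eq_sum]; exact Finset.add_sum_erase _ _ (Finset.mem_univ 0)
  rcases Nat.eq_zero_or_pos t with h0 | hpos
  · left
    have : mdeg u ≤ u 0 := by omega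
    have hrest : ∑ i ∈ Finset.univ.erase 0, u i = 0 := by omega
    ext i
    rcases eq_or_ne i 0 with rfl | hi
    · simp only [Finsupp.single_eq_same]; omega
    · rw [Finsupp.single_eq_of_ne' (Ne.symm hi)]
      exact (Finset.sum_eq_zero_iff.1 hrest) i (Finset.mem_erase.2 ⟨hi, Finset.mem_univ i⟩)
  · right
    -- there is j ≠ 0 with u j ≠ 0
    have hex : ∃ j ∈ Finset.univ.erase (0 : Fin (n+1)), u j ≠ 0 := by
      by_contra hc
      push_neg at hc
      have : ∑ i ∈ Finset.univ.erase 0, u i = 0 :=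
        Finset.sum_eq_zero fun i hi => hc i hi
      omega
    obtain ⟨j, hj, huj⟩ := hex
    have hj0 : j ≠ 0 := (Finset.mem_erase.1 hj).1
    have hle : Finsupp.single j 1 ≤ u + Finsupp.single 0 1 := by
      rw [Finsupp.single_le_iff]
      simp only [Finsupp.add_apply]
      rw [Finsupp.single_eq_of_ne' (Ne.symm hj0)]
      omega
    set v : Mon (n+1) := u + Finsupp.single 0 1 - Finsupp.single j 1 with hv
    have hstep : BorelStep v u := by
      refine ⟨0, j, ?_, ?_⟩
      · exact Fin.pos_of_ne_zero hj0
      · rw [hv, tsub_add_cancel_of_le hle]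
    have hmv : mdeg v = mdeg u := by
      rw [hv, mdeg_tsub hle, mdeg_add, mdeg_single, mdeg_single]
      omega
    have hv0 : v 0 = u 0 + 1 := by
      rw [hv, Finsupp.tsub_apply, Finsupp.add_apply, Finsupp.single_eq_same,
        Finsupp.single_eq_of_ne' hj0]
      omega
    have hu0 : u 0 < mdeg u := by
      have : u j ≤ ∑ i ∈ Finset.univ.erase 0, u i :=
        Finset.single_le_sum (fun i _ => Nat.zero_le _) hj
      omega
    rcases ih (mdeg v - v 0) (by omega) v rfl with hveq | hvlt
    · rw [hmv] at hveq
      exact Relation.TransGen.single (hveq ▸ hstep)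
    · rw [hmv] at hvlt
      exact Relation.TransGen.tail hvlt hstep

lemma mem_of_big (hss : StronglyStable 𝔧) {D : ℕ} (hD : Finsupp.single 0 D ∈ 𝔧)
    {u : Mon (n+1)} (h : D ≤ mdeg u) : u ∈ 𝔧 := by
  have hw : Finsupp.single (0 : Fin (n+1)) (mdeg u) ∈ 𝔧 := by
    have : Finsupp.single (0 : Fin (n+1)) (mdeg u)
        = Finsupp.single 0 D + Finsupp.single 0 (mdeg u - D) := by
      rw [← Finsupp.single_add]; congr 1; omega
    rw [this]
    exact hss.1 _ hD _
  rcases borelChain u with h1 | h1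
  · rwa [h1]
  · exact hss.2 _ hw _ h1

lemma exists_D (hfin : {u : Mon (n + 1) | u ∉ 𝔧}.Finite) :
    ∃ D : ℕ, Finsupp.single 0 D ∈ 𝔧 ∧ ∀ k < D, Finsupp.single 0 k ∉ 𝔧 := by
  have hex : ∃ k : ℕ, Finsupp.single (0 : Fin (n+1)) k ∈ 𝔧 := by
    by_contra hc
    push_neg at hc
    have hinj : Function.Injective (fun k : ℕ => Finsupp.single (0 : Fin (n+1)) k) := by
      intro a b hab
      have := congrArg (fun f : Mon (n+1) => f 0) hab
      simpa using this
    have hsub : Set.range (fun k : ℕ => Finsupp.single (0 : Fin (n+1)) k)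
        ⊆ {u : Mon (n + 1) | u ∉ 𝔧} := by
      rintro _ ⟨k, rfl⟩; exact hc k
    have : (Set.range (fun k : ℕ => Finsupp.single (0 : Fin (n+1)) k)).Finite :=
      hfin.subset hsub
    exact Set.infinite_range_of_injective hinj this
  classical
  exact ⟨Nat.find hex, Nat.find_spec hex, fun k hk => Nat.find_min hex hk⟩

end Aux


section Aux2

variable {n : ℕ} {𝔧 : Set (Mon (n + 1))}

lemma apply_le_mdeg (u : Mon (n+1)) (i : Fin (n+1)) : u i ≤ mdeg u := by
  rw [mdeg_eq_sum]
  exact Finset.single_le_sum (fun j _ => Nat.zero_le _) (Finset.mem_univ i)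

lemma finite_mdeg_le (c : ℕ) : {u : Mon (n+1) | mdeg u ≤ c}.Finite := by
  have : {u : Mon (n+1) | mdeg u ≤ c} ⊆
      Set.range (fun v : Fin (n+1) → Fin (c+1) =>
        (Finsupp.equivFunOnFinite.symm (fun i => (v i : ℕ)) : Mon (n+1))) := by
    intro u hu
    refine ⟨fun i => ⟨u i, Nat.lt_succ_of_le ((apply_le_mdeg u i).trans hu)⟩, ?_⟩
    apply Finsupp.ext; intro i
    simp [Finsupp.equivFunOnFinite]
  exact Set.Finite.subset (Set.finite_range _) this

lemma minBasis_mdeg_le (hss : StronglyStable 𝔧) {D : ℕ}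
    (hD : Finsupp.single 0 D ∈ 𝔧) {β : Mon (n+1)} (hβ : β ∈ MinBasis 𝔧) :
    mdeg β ≤ D := by
  by_contra hc
  push_neg at hc
  have hβ0 : β ≠ 0 := by
    intro h; rw [h, mdeg_zero] at hc; omega
  obtain ⟨q, hq⟩ := Finsupp.ne_iff.1 hβ0
  simp only [Finsupp.coe_zero, Pi.zero_apply] at hq
  have hle : Finsupp.single q 1 ≤ β := Finsupp.single_le_iff.2 (by omega)
  have hmem : β - Finsupp.single q 1 ∈ 𝔧 := by
    apply mem_of_big hss hD
    rw [mdeg_tsub hle, mdeg_single]; omega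
  have := hβ.2 _ hmem tsub_le_self
  have := congrArg (fun f : Mon (n+1) => f q) this
  simp only [Finsupp.tsub_apply, Finsupp.single_eq_same] at this
  omega

lemma minBasis_finite (hss : StronglyStable 𝔧) {D : ℕ}
    (hD : Finsupp.single 0 D ∈ 𝔧) : (MinBasis 𝔧).Finite :=
  (finite_mdeg_le D).subset (fun _ hβ => minBasis_mdeg_le hss hD hβ)

lemma single0D_minBasis {D : ℕ} (hD : Finsupp.single 0 D ∈ 𝔧)
    (hD' : ∀ k < D, Finsupp.single 0 k ∉ 𝔧) :
    Finsupp.single 0 D ∈ MinBasis 𝔧 := by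
  refine ⟨hD, fun v hv hvle => ?_⟩
  have hv0 : ∀ i : Fin (n+1), i ≠ 0 → v i = 0 := by
    intro i hi
    have := Finsupp.le_def.1 hvle i
    rwa [Finsupp.single_eq_of_ne' (Ne.symm hi), Nat.le_zero] at this
  have hveq : v = Finsupp.single 0 (v 0) := by
    apply Finsupp.ext; intro i
    rcases eq_or_ne i 0 with rfl | hi
    · simp
    · rw [Finsupp.single_eq_of_ne' (Ne.symm hi)]; exact hv0 i hi
  have hle : v 0 ≤ D := by
    have := Finsupp.le_def.1 hvle 0
    simpa using this
  rcases lt_or_eq_of_le hle with hlt | heq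
  · exact absurd (hveq ▸ hv) (hD' _ hlt)
  · rw [hveq, heq]

lemma regC_eq (hss : StronglyStable 𝔧) {D : ℕ} (hD : Finsupp.single 0 D ∈ 𝔧)
    (hD' : ∀ k < D, Finsupp.single 0 k ∉ 𝔧) : regC 𝔧 = D := by
  have hmem : D ∈ mdeg '' MinBasis 𝔧 :=
    ⟨Finsupp.single 0 D, single0D_minBasis hD hD', mdeg_single _ _⟩
  have hbd : ∀ x ∈ mdeg '' MinBasis 𝔧, x ≤ D := by
    rintro _ ⟨β, hβ, rfl⟩; exact minBasis_mdeg_le hss hD hβ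
  exact le_antisymm (csSup_le ⟨D, hmem⟩ hbd) (le_csSup ⟨D, hbd⟩ hmem)

lemma satC_eq (hss : StronglyStable 𝔧) {D : ℕ} (hD : Finsupp.single 0 D ∈ 𝔧)
    (hD' : ∀ k < D, Finsupp.single 0 k ∉ 𝔧) : satC 𝔧 = D := by
  rcases Nat.eq_zero_or_pos D with rfl | hpos
  · have h0 : (0 : Mon (n+1)) ∈ 𝔧 := by
      have : Finsupp.single (0 : Fin (n+1)) 0 = 0 := Finsupp.single_zero 0
      rwa [this] at hD
    have : {b : Mon (n+1) | b ∈ MinBasis 𝔧 ∧ b 0 ≠ 0} = ∅ := by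
      ext b
      simp only [Set.mem_setOf_eq, Set.mem_empty_iff_false, iff_false, not_and]
      intro hb
      have := hb.2 0 h0 (show 0 ≤ b from zero_le)
      rw [← this]
      simp
    rw [satC, this, Set.image_empty, csSup_empty]
    rfl
  · have hmem : D ∈ mdeg '' {b : Mon (n+1) | b ∈ MinBasis 𝔧 ∧ b 0 ≠ 0} := by
      refine ⟨Finsupp.single 0 D, ⟨single0D_minBasis hD hD', ?_⟩, mdeg_single _ _⟩
      simp; omega
    have hbd : ∀ x ∈ mdeg '' {b : Mon (n+1) | b ∈ MinBasis 𝔧 ∧ b 0 ≠ 0}, x ≤ D := by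
      rintro _ ⟨β, hβ, rfl⟩; exact minBasis_mdeg_le hss hD hβ.1
    exact le_antisymm (csSup_le ⟨D, hmem⟩ hbd) (le_csSup ⟨D, hbd⟩ hmem)

lemma starCond_zero (α : Mon (n+1)) : StarCond α 0 := by
  intro i j _ hj; simp at hj

lemma decomp_exists (hss : StronglyStable 𝔧) {γ : Mon (n+1)} (hγ : γ ∈ 𝔧) :
    ∃ α η : Mon (n+1), α ∈ MinBasis 𝔧 ∧ γ = α + η ∧ StarCond α η := by
  classical
  generalize hk : mdeg γ = k
  induction k using Nat.strong_induction_on generalizing γ with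
  | _ k ih =>
  by_cases hMB : γ ∈ MinBasis 𝔧
  · exact ⟨γ, 0, hMB, (add_zero γ).symm, starCond_zero γ⟩
  have hγ0 : γ ≠ 0 := by
    intro h
    exact hMB ⟨hγ, fun v _ hvle => le_antisymm (h ▸ hvle) (h ▸ (zero_le : (0 : Mon (n+1)) ≤ v))⟩
  have hne : γ.support.Nonempty := Finsupp.support_nonempty_iff.2 hγ0
  set p := γ.support.min' hne with hp
  have hpmem : p ∈ γ.support := γ.support.min'_mem hne
  have hpγ : γ p ≠ 0 := Finsupp.mem_support_iff.1 hpmem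
  -- find a proper divisor in 𝔧
  obtain ⟨v, hv𝔧, hvle, hvne⟩ : ∃ v ∈ 𝔧, v ≤ γ ∧ v ≠ γ := by
    by_contra hc
    push_neg at hc
    exact hMB ⟨hγ, fun v hv hvle => hc v hv hvle⟩
  obtain ⟨q, hq⟩ : ∃ q, v q < γ q := by
    by_contra hc
    push_neg at hc
    exact hvne (le_antisymm hvle (Finsupp.le_def.2 hc))
  have hqle : Finsupp.single q 1 ≤ γ := Finsupp.single_le_iff.2 (by omega)
  have hq𝔧 : γ - Finsupp.single q 1 ∈ 𝔧 := by
    have hvle' : v ≤ γ - Finsupp.single q 1 := by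
      rw [Finsupp.le_def]
      intro i
      rw [Finsupp.tsub_apply]
      rcases eq_or_ne i q with rfl | hiq
      · rw [Finsupp.single_eq_same]; omega
      · rw [Finsupp.single_eq_of_ne' (Ne.symm hiq)]
        have := Finsupp.le_def.1 hvle i; omega
    have := hss.1 v hv𝔧 (γ - Finsupp.single q 1 - v)
    rwa [add_tsub_cancel_of_le hvle'] at this
  have hple : Finsupp.single p 1 ≤ γ := Finsupp.single_le_iff.2 (by omega)
  have hp𝔧 : γ - Finsupp.single p 1 ∈ 𝔧 := by
    rcases eq_or_ne q p with rfl | hqp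
    · exact hq𝔧
    · have hqmem : q ∈ γ.support := Finsupp.mem_support_iff.2 (by omega)
      have hpq : p < q := lt_of_le_of_ne (γ.support.min'_le q hqmem) (Ne.symm hqp)
      refine hss.2 _ hq𝔧 _ (Relation.TransGen.single ⟨p, q, hpq, ?_⟩)
      rw [tsub_add_cancel_of_le hqle, tsub_add_cancel_of_le hple]
  have hmd : mdeg (γ - Finsupp.single p 1) = k - 1 := by
    rw [mdeg_tsub hple, mdeg_single, hk]
  have hkpos : 1 ≤ k := by
    rw [← hk]
    have := apply_le_mdeg γ p; omega
  obtain ⟨α, η', hα, heq, hstar⟩ := ih (k-1) (by omega) hp𝔧 hmd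
  refine ⟨α, η' + Finsupp.single p 1, hα, ?_, ?_⟩
  · rw [← add_assoc, ← heq, tsub_add_cancel_of_le hple]
  · intro i j hi hj
    rw [Finsupp.add_apply] at hj
    have hαγ : α ≤ γ := by
      rw [← tsub_add_cancel_of_le hple, heq, add_assoc]
      exact le_add_right le_rfl
    have hiγ : i ∈ γ.support := by
      rw [Finsupp.mem_support_iff]
      have := Finsupp.le_def.1 hαγ i; omega
    rcases Nat.eq_zero_or_pos (η' j) with h0 | hpos'
    · have hjp : j = p := by
        by_contra hjp
        rw [Finsupp.single_eq_of_ne' (Ne.symm hjp)] at hj; omega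
      rw [hjp]
      exact γ.support.min'_le i hiγ
    · exact hstar i j hi (by omega)

lemma decomp_unique (hss : StronglyStable 𝔧) {α η α' η' : Mon (n+1)}
    (hα : α ∈ MinBasis 𝔧) (hα' : α' ∈ MinBasis 𝔧)
    (heq : α + η = α' + η') (hs : StarCond α η) (hs' : StarCond α' η') :
    α = α' ∧ η = η' := by
  classical
  suffices h : α = α' by
    refine ⟨h, ?_⟩
    rw [h] at heq
    exact add_left_cancel heq
  -- zero cases
  rcases eq_or_ne α 0 with rfl | hα0
  · exact hα'.2 0 hα.1 (show 0 ≤ α' from zero_le)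
  rcases eq_or_ne α' 0 with rfl | hα'0
  · exact (hα.2 0 hα'.1 (show 0 ≤ α from zero_le)).symm
  have hne : α.support.Nonempty := Finsupp.support_nonempty_iff.2 hα0
  have hne' : α'.support.Nonempty := Finsupp.support_nonempty_iff.2 hα'0
  set p := α.support.min' hne with hp
  set p' := α'.support.min' hne' with hp'
  have hpα : α p ≠ 0 := Finsupp.mem_support_iff.1 (α.support.min'_mem hne)
  have hpα' : α' p' ≠ 0 := Finsupp.mem_support_iff.1 (α'.support.min'_mem hne')
  have happ : ∀ i, α i + η i = α' i + η' i := by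
    intro i
    have := congrArg (fun f : Mon (n+1) => f i) heq
    simpa using this
  have hηsupp : ∀ j, η j ≠ 0 → j ≤ p := fun j hj => hs p j hpα hj
  have hη'supp : ∀ j, η' j ≠ 0 → j ≤ p' := fun j hj => hs' p' j hpα' hj
  have hαsupp : ∀ i, α i ≠ 0 → p ≤ i := fun i hi =>
    α.support.min'_le i (Finsupp.mem_support_iff.2 hi)
  have hα'supp : ∀ i, α' i ≠ 0 → p' ≤ i := fun i hi =>
    α'.support.min'_le i (Finsupp.mem_support_iff.2 hi)
  have main : ∀ (a b e e' : Mon (n+1)) (pa pb : Fin (n+1)), pa ≤ pb →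
      (∀ i, a i + e i = b i + e' i) →
      (∀ j, e j ≠ 0 → j ≤ pa) → (∀ j, e' j ≠ 0 → j ≤ pb) →
      (∀ i, a i ≠ 0 → pa ≤ i) → (∀ i, b i ≠ 0 → pb ≤ i) →
      b ≤ a ∨ a ≤ b := by
    intro a b e e' pa pb hpp happ2 he he' ha hb
    have hgt : ∀ i, pb < i → a i = b i := by
      intro i hi
      have h1 : e i = 0 := by
        by_contra hc
        exact absurd (he i hc) (not_le.2 (lt_of_le_of_lt hpp hi))
      have h2 : e' i = 0 := by
        by_contra hc
        exact absurd (he' i hc) (not_le.2 hi)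
      have := happ2 i; omega
    rcases le_or_gt (b pb) (a pb) with hcase | hcase
    · left
      rw [Finsupp.le_def]
      intro i
      rcases lt_trichotomy i pb with h | h | h
      · have : b i = 0 := by
          by_contra hc; exact absurd (hb i hc) (not_le.2 h)
        omega
      · rw [h]; exact hcase
      · rw [hgt i h]
    · right
      have hepb : e pb ≠ 0 := by
        have := happ2 pb
        intro hc
        omega
      have hpab : pa = pb := le_antisymm hpp (he pb hepb)
      rw [Finsupp.le_def]
      intro i
      rcases lt_trichotomy i pb with h | h | h
      · have : a i = 0 := by
          by_contra hc
          exact absurd (ha i hc) (not_le.2 (hpab ▸ h))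
        omega
      · rw [h]; omega
      · rw [hgt i h]
  have hcomp : α' ≤ α ∨ α ≤ α' := by
    rcases le_total p p' with h | h
    · exact main α α' η η' p p' h happ hηsupp hη'supp hαsupp hα'supp
    · rcases main α' α η' η p' p h (fun i => (happ i).symm) hη'supp hηsupp hα'supp hαsupp
        with h1 | h1
      · exact Or.inr h1
      · exact Or.inl h1
  rcases hcomp with h | h
  · exact (hα.2 α' hα'.1 h).symm
  · exact hα'.2 α hα.1 h

end Aux2

def mu {N : ℕ} (M : ℕ) (u : Mon N) : ℕ := ∑ i, u i * (M + 1) ^ (i : ℕ)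

open scoped Classical in
noncomputable def rnk {N : ℕ} (𝔧 : Set (Mon N)) (M : ℕ) (γ : Mon N) : ℕ :=
  if h : ∃ α, ∃ η, α ∈ MinBasis 𝔧 ∧ γ = α + η ∧ StarCond α η then
    mu M h.choose_spec.choose
  else 0

section Aux3

variable {n : ℕ} {𝔧 : Set (Mon (n + 1))}

lemma mu_add (M : ℕ) (u v : Mon (n+1)) : mu M (u + v) = mu M u + mu M v := by
  simp [mu, Finsupp.add_apply, add_mul, Finset.sum_add_distrib]

lemma mu_single (M : ℕ) (j : Fin (n+1)) (k : ℕ) :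
    mu M (Finsupp.single j k) = k * (M + 1) ^ (j : ℕ) := by
  classical
  rw [mu, Finset.sum_eq_single j]
  · rw [Finsupp.single_eq_same]
  · intro b _ hb
    rw [Finsupp.single_eq_of_ne' (Ne.symm hb), zero_mul]
  · intro h; exact absurd (Finset.mem_univ j) h

lemma mu_lt_pow (M : ℕ) {η : Mon (n+1)} (j : Fin (n+1))
    (hsupp : ∀ p : Fin (n+1), η p ≠ 0 → p < j) (hmd : mdeg η ≤ M) :
    mu M η < (M + 1) ^ (j : ℕ) := by
  rcases Nat.eq_zero_or_pos (j : ℕ) with hj0 | hjpos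
  · have hη : η = 0 := by
      ext p
      by_contra hc
      have := hsupp p hc
      have : (p : ℕ) < (j : ℕ) := this
      omega
    rw [hη]
    simp [mu]
  · obtain ⟨c, hc⟩ : ∃ c, (j : ℕ) = c + 1 := ⟨(j : ℕ) - 1, by omega⟩
    have h1 : mu M η ≤ mdeg η * (M + 1) ^ c := by
      rw [mu, mdeg_eq_sum, Finset.sum_mul]
      apply Finset.sum_le_sum
      intro i _
      rcases Nat.eq_zero_or_pos (η i) with h0 | hpos
      · rw [h0]; simp
      · apply Nat.mul_le_mul_left
        apply Nat.pow_le_pow_right (by omega)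
        have : (i : ℕ) < (j : ℕ) := hsupp i (by omega)
        omega
    have h2 : mdeg η * (M + 1) ^ c ≤ M * (M + 1) ^ c :=
      Nat.mul_le_mul_right _ hmd
    have h3 : M * (M + 1) ^ c < (M + 1) ^ (c + 1) := by
      have hp : (0:ℕ) < (M + 1) ^ c := pow_pos (by omega) c
      rw [pow_succ]
      nlinarith
    rw [hc]
    exact lt_of_le_of_lt (h1.trans h2) h3

end Aux3

section Aux4

variable {n : ℕ} {𝔧 : Set (Mon (n + 1))}

lemma notmem_mdeg_lt (hss : StronglyStable 𝔧) {D : ℕ}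
    (hD : Finsupp.single 0 D ∈ 𝔧) {u : Mon (n+1)} (hu : u ∉ 𝔧) : mdeg u < D := by
  by_contra hc
  push_neg at hc
  exact hu (mem_of_big hss hD hc)

lemma descent (hss : StronglyStable 𝔧) {D M : ℕ}
    (hD : Finsupp.single 0 D ∈ 𝔧) (hDM : D ≤ M)
    {u η α'' η'' : Mon (n+1)} (hu : u ∉ 𝔧) (hα'' : α'' ∈ 𝔧)
    (heq : η + u = α'' + η'') (hstar : StarCond α'' η'') :
    mu M η'' < mu M η := by
  classical
  have hmdu : mdeg u ≤ M := by
    have := notmem_mdeg_lt hss hD hu; omega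
  have happ : ∀ i, η i + u i = α'' i + η'' i := by
    intro i
    have := congrArg (fun f : Mon (n+1) => f i) heq
    simpa using this
  set R : Mon (n+1) := α'' - u with hR
  set L : Mon (n+1) := u - α'' with hL
  have hRa : ∀ i, R i = α'' i - u i := fun i => Finsupp.tsub_apply _ _ i
  have hLa : ∀ i, L i = u i - α'' i := fun i => Finsupp.tsub_apply _ _ i
  have hsum : mu M η'' + mu M R = mu M η + mu M L := by
    rw [← mu_add, ← mu_add]
    congr 1
    ext i
    simp only [Finsupp.add_apply, hRa i, hLa i]
    have := happ i; omega
  suffices h : mu M L < mu M R by omega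
  have hR0 : R ≠ 0 := by
    intro hc
    apply hu
    have hle : α'' ≤ u := by
      rw [Finsupp.le_def]
      intro i
      have : R i = 0 := by rw [hc]; rfl
      rw [hRa i] at this; omega
    have := hss.1 α'' hα'' (u - α'')
    rwa [add_tsub_cancel_of_le hle] at this
  have hRne : R.support.Nonempty := Finsupp.support_nonempty_iff.2 hR0
  set q₀ := R.support.min' hRne with hq₀def
  have hq₀ : R q₀ ≠ 0 := Finsupp.mem_support_iff.1 (R.support.min'_mem hRne)
  have hq₀α : α'' q₀ ≠ 0 := by rw [hRa q₀] at hq₀; omega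
  have hLlt : ∀ l, L l ≠ 0 → l < q₀ := by
    intro l hl
    rw [hLa l] at hl
    have hη''l : η'' l ≠ 0 := by have := happ l; omega
    have hle : l ≤ q₀ := hstar q₀ l hq₀α hη''l
    have hne : l ≠ q₀ := by
      intro hc
      rw [hc] at hl
      rw [hRa q₀] at hq₀
      omega
    exact lt_of_le_of_ne hle hne
  have h1 : mu M L < (M + 1) ^ (q₀ : ℕ) := by
    apply mu_lt_pow M q₀ hLlt
    exact le_trans (mdeg_mono tsub_le_self) hmdu
  have h2 : (M + 1) ^ (q₀ : ℕ) ≤ mu M R := by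
    have hterm : (M + 1) ^ (q₀ : ℕ) ≤ R q₀ * (M + 1) ^ (q₀ : ℕ) :=
      Nat.le_mul_of_pos_left _ (by omega)
    refine hterm.trans ?_
    rw [mu]
    exact Finset.single_le_sum (f := fun i : Fin (n+1) => R i * (M + 1) ^ (i : ℕ))
      (fun i _ => Nat.zero_le _) (Finset.mem_univ q₀)
  omega

lemma init_decomp (hss : StronglyStable 𝔧)
    {w : Mon (n+1)} {j : Fin (n+1)}
    (hw : w ∉ 𝔧 ∨ (w ∈ MinBasis 𝔧 ∧ ∃ j₀ : Fin (n+1), j₀ < j ∧ w j₀ ≠ 0))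
    {α₁ η₁ : Mon (n+1)} (hα₁ : α₁ ∈ MinBasis 𝔧)
    (heq : Finsupp.single j 1 + w = α₁ + η₁) (hstar : StarCond α₁ η₁) :
    (∀ p : Fin (n+1), η₁ p ≠ 0 → p < j) ∧ mdeg η₁ ≤ mdeg w := by
  classical
  have happ : ∀ i, Finsupp.single j 1 i + w i = α₁ i + η₁ i := by
    intro i
    have := congrArg (fun f : Mon (n+1) => f i) heq
    simpa using this
  have hα₁0 : α₁ ≠ 0 := by
    intro hc
    have h0 : (0 : Mon (n+1)) ∈ 𝔧 := hc ▸ hα₁.1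
    rcases hw with hw | ⟨hwMB, j₀, _, hj₀⟩
    · apply hw
      have := hss.1 0 h0 w
      rwa [zero_add] at this
    · have := hwMB.2 0 h0 (show 0 ≤ w from zero_le)
      rw [← this] at hj₀
      simp at hj₀
  constructor
  · intro p hp
    by_contra hc
    push_neg at hc  -- j ≤ p
    have hα₁supp : ∀ i, α₁ i ≠ 0 → p ≤ i := fun i hi => hstar i p hi hp
    have hle : α₁ ≤ w := by
      rw [Finsupp.le_def]
      intro i
      rcases eq_or_ne i j with rfl | hij
      · rcases lt_or_eq_of_le hc with hlt | heqj
        · -- i < p : α₁ i = 0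
          have : α₁ i = 0 := by
            by_contra hcc
            exact absurd (hα₁supp i hcc) (not_le.2 hlt)
          omega
        · -- p = j, η₁ j ≠ 0
          have hη₁j : η₁ i ≠ 0 := heqj ▸ hp
          have := happ i
          rw [Finsupp.single_eq_same] at this
          omega
      · have := happ i
        rw [Finsupp.single_eq_of_ne' (Ne.symm hij)] at this
        omega
    rcases hw with hw | ⟨hwMB, j₀, hj₀lt, hj₀⟩
    · apply hw
      have := hss.1 α₁ hα₁.1 (w - α₁)
      rwa [add_tsub_cancel_of_le hle] at this
    · have hαw : α₁ = w := hwMB.2 α₁ hα₁.1 hle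
      have : p ≤ j₀ := hα₁supp j₀ (by rw [hαw]; exact hj₀)
      have : (j₀ : ℕ) < (j : ℕ) := hj₀lt
      have : (j : ℕ) ≤ (p : ℕ) := hc
      omega
  · have hmd : mdeg (Finsupp.single j 1 + w) = mdeg α₁ + mdeg η₁ := by
      rw [heq, mdeg_add]
    rw [mdeg_add, mdeg_single] at hmd
    have : mdeg α₁ ≠ 0 := by
      intro hc
      exact hα₁0 (mdeg_eq_zero hc)
    omega

lemma rnk_eq (hss : StronglyStable 𝔧) {M : ℕ} {γ α η : Mon (n+1)}
    (hα : α ∈ MinBasis 𝔧) (heq : γ = α + η) (hstar : StarCond α η) :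
    rnk 𝔧 M γ = mu M η := by
  have hex : ∃ a, ∃ e, a ∈ MinBasis 𝔧 ∧ γ = a + e ∧ StarCond a e := ⟨α, η, hα, heq, hstar⟩
  have h1 := hex.choose_spec.choose_spec
  have h2 := decomp_unique hss h1.1 hα (h1.2.1.symm.trans heq) h1.2.2 hstar
  rw [rnk, dif_pos hex, h2.2]

end Aux4

section Poly

variable {n : ℕ} {𝔧 : Set (Mon (n + 1))} {K} {f : Mon (n + 1) → MvPolynomial (Fin (n + 1)) K}

/-- head-term condition extracted from a marked set -/
def MSet (𝔧 : Set (Mon (n+1))) (f : Mon (n + 1) → MvPolynomial (Fin (n + 1)) K) : Prop :=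
  ∀ α ∈ MinBasis 𝔧, MvPolynomial.coeff α (f α) = 1 ∧
    ∀ u ∈ (f α).support, u ≠ α → u ∉ 𝔧

lemma mset_of_jm {m : ℕ} (h : JmMarkedSet K 𝔧 m f) : MSet 𝔧 f :=
  fun α hα => ⟨(h α hα).1, fun u hu hne => ((h α hα).2 u hu hne).1⟩

lemma coeff_mono_mul (η u : Mon (n+1)) (p : MvPolynomial (Fin (n+1)) K) :
    MvPolynomial.coeff (η + u) (mono K η * p) = MvPolynomial.coeff u p := by
  rw [mono, MvPolynomial.coeff_monomial_mul, one_mul]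

lemma rstep_props {g g₁ : MvPolynomial (Fin (n+1)) K} {γ α η : Mon (n+1)}
    (hγeq : γ = α + η) (hco : MvPolynomial.coeff α (f α) = 1)
    (hg₁ : g₁ = g - MvPolynomial.coeff γ g • (mono K η * f α)) :
    γ ∉ g₁.support ∧
      ∀ v ∈ g₁.support, v ≠ γ ∧
        (v ∈ g.support ∨ ∃ u ∈ (f α).support, u ≠ α ∧ v = η + u) := by
  have hγηα : γ = η + α := by rw [hγeq]; exact add_comm α η
  have hcoγ : MvPolynomial.coeff γ (mono K η * f α) = 1 := by
    rw [hγηα, coeff_mono_mul, hco]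
  have hγ₁ : MvPolynomial.coeff γ g₁ = 0 := by
    rw [hg₁, MvPolynomial.coeff_sub, MvPolynomial.coeff_smul, hcoγ, smul_eq_mul,
      mul_one, sub_self]
  constructor
  · rw [MvPolynomial.mem_support_iff]
    exact fun hc => hc hγ₁
  · intro v hv
    have hvne : v ≠ γ := by
      intro hc
      rw [MvPolynomial.mem_support_iff, hc, hγ₁] at hv
      exact hv rfl
    refine ⟨hvne, ?_⟩
    by_cases hvg : v ∈ g.support
    · exact Or.inl hvg
    · right
      rw [MvPolynomial.mem_support_iff] at hv hvg
      push_neg at hvg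
      have hcv : MvPolynomial.coeff v (mono K η * f α) ≠ 0 := by
        intro hc
        rw [hg₁, MvPolynomial.coeff_sub, MvPolynomial.coeff_smul, hc, hvg] at hv
        simp at hv
      rw [mono, MvPolynomial.coeff_monomial_mul'] at hcv
      by_cases hle : η ≤ v
      · rw [if_pos hle, one_mul] at hcv
        refine ⟨v - η, MvPolynomial.mem_support_iff.2 hcv, ?_, ?_⟩
        · intro hc
          apply hvne
          rw [hγηα, ← hc, add_tsub_cancel_of_le hle]
        · rw [add_tsub_cancel_of_le hle]
      · rw [if_neg hle] at hcv
        exact absurd rfl hcv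

lemma reduces_sub_mem (hred : Reduces K 𝔧 f g g') : g - g' ∈ idealG K 𝔧 f := by
  induction hred with
  | refl => simp
  | tail hab hbc ih =>
    rename_i b c
    obtain ⟨γ, α, η, _, _, hα, _, _, hc⟩ := hbc
    have hbc' : b - c = MvPolynomial.coeff γ b • (mono K η * f α) := by
      rw [hc]; ring
    have hfα : f α ∈ idealG K 𝔧 f := Ideal.subset_span ⟨α, hα, rfl⟩
    have hx : MvPolynomial.coeff γ b • (mono K η * f α) ∈ idealG K 𝔧 f := by
      rw [MvPolynomial.smul_eq_C_mul, ← mul_assoc]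
      exact Ideal.mul_mem_left _ _ hfα
    have : g - c = (g - b) + (b - c) := by ring
    rw [this, hbc']
    exact Ideal.add_mem _ ih hx

end Poly

open scoped Classical in
noncomputable def Phi {n : ℕ} {K : Type} [Field K] (𝔧 : Set (Mon (n+1))) (M B : ℕ)
    (g : MvPolynomial (Fin (n+1)) K) : ℕ :=
  ∑ γ ∈ g.support.filter (· ∈ 𝔧), B ^ rnk 𝔧 M γ

section NF

variable {n : ℕ} {𝔧 : Set (Mon (n + 1))} {K : Type} [Field K]
  {f : Mon (n + 1) → MvPolynomial (Fin (n + 1)) K}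

lemma exists_normal_form (hss : StronglyStable 𝔧) {D M : ℕ}
    (hD : Finsupp.single 0 D ∈ 𝔧) (hDM : D ≤ M)
    (hm : MSet 𝔧 f) (g : MvPolynomial (Fin (n+1)) K) :
    ∃ g', Reduces K 𝔧 f g g' ∧ IsReducedPoly K 𝔧 g' := by
  classical
  set MB : Finset (Mon (n+1)) := (minBasis_finite hss hD).toFinset with hMB
  set T : ℕ := MB.sup (fun α => (f α).support.card) with hT
  set B : ℕ := T + 1 with hB
  suffices H : ∀ k, ∀ g : MvPolynomial (Fin (n+1)) K, Phi 𝔧 M B g < k →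
      ∃ g', Reduces K 𝔧 f g g' ∧ IsReducedPoly K 𝔧 g' from
    H (Phi 𝔧 M B g + 1) g (Nat.lt_succ_self _)
  intro k
  induction k with
  | zero => intro g hg; omega
  | succ k ih =>
    intro g hg
    by_cases hF : g.support.filter (· ∈ 𝔧) = ∅
    · refine ⟨g, Relation.ReflTransGen.refl, fun u hu hu𝔧 => ?_⟩
      have : u ∈ g.support.filter (· ∈ 𝔧) := Finset.mem_filter.2 ⟨hu, hu𝔧⟩
      rw [hF] at this
      exact absurd this (Finset.notMem_empty u)
    · obtain ⟨γ, hγF⟩ := Finset.nonempty_of_ne_empty hF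
      obtain ⟨hγsup, hγ𝔧⟩ := Finset.mem_filter.1 hγF
      obtain ⟨α, η, hα, heq, hstar⟩ := decomp_exists hss hγ𝔧
      set g₁ : MvPolynomial (Fin (n+1)) K :=
        g - MvPolynomial.coeff γ g • (mono K η * f α) with hg₁
      have hstep : RStep K 𝔧 f g g₁ := ⟨γ, α, η, hγsup, hγ𝔧, hα, heq, hstar, rfl⟩
      have hprops := rstep_props heq (hm α hα).1 hg₁
      -- Phi decreases
      have hrnkγ : rnk 𝔧 M γ = mu M η := rnk_eq hss hα heq hstar
      set r : ℕ := rnk 𝔧 M γ with hr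
      set New : Finset (Mon (n+1)) :=
        (((f α).support.erase α).image (fun u => η + u)).filter (· ∈ 𝔧) with hNew
      have hNewlt : ∀ v ∈ New, rnk 𝔧 M v < r := by
        intro v hv
        obtain ⟨hvim, hv𝔧⟩ := Finset.mem_filter.1 hv
        obtain ⟨u, hu, rfl⟩ := Finset.mem_image.1 hvim
        obtain ⟨hune, husup⟩ := Finset.mem_erase.1 hu
        have hu𝔧 : u ∉ 𝔧 := (hm α hα).2 u husup hune
        obtain ⟨α'', η'', hα'', heq'', hstar''⟩ := decomp_exists hss hv𝔧
        have : rnk 𝔧 M (η + u) = mu M η'' := rnk_eq hss hα'' heq'' hstar''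
        rw [this, hrnkγ]
        exact descent hss hD hDM hu𝔧 hα''.1 heq'' hstar''
      have hsub : g₁.support.filter (· ∈ 𝔧) ⊆
          ((g.support.filter (· ∈ 𝔧)).erase γ) ∪ New := by
        intro v hv
        obtain ⟨hvsup, hv𝔧⟩ := Finset.mem_filter.1 hv
        obtain ⟨hvne, hvcase⟩ := hprops.2 v hvsup
        rcases hvcase with hvg | ⟨u, hu, hune, rfl⟩
        · exact Finset.mem_union_left _
            (Finset.mem_erase.2 ⟨hvne, Finset.mem_filter.2 ⟨hvg, hv𝔧⟩⟩)
        · refine Finset.mem_union_right _ (Finset.mem_filter.2 ⟨?_, hv𝔧⟩)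
          exact Finset.mem_image.2 ⟨u, Finset.mem_erase.2 ⟨hune, hu⟩, rfl⟩
      have hNewsum : ∑ v ∈ New, B ^ rnk 𝔧 M v < B ^ r := by
        rcases Nat.eq_zero_or_pos r with hr0 | hrpos
        · have : New = ∅ := by
            rw [Finset.eq_empty_iff_forall_notMem]
            intro v hv
            have := hNewlt v hv
            omega
          rw [this]
          simp
          exact pow_pos (by omega) _
        · have h1 : ∀ v ∈ New, B ^ rnk 𝔧 M v ≤ B ^ (r - 1) := by
            intro v hv
            apply Nat.pow_le_pow_right (by omega)
            have := hNewlt v hv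
            omega
          calc ∑ v ∈ New, B ^ rnk 𝔧 M v ≤ New.card * B ^ (r-1) := by
                  simpa using Finset.sum_le_card_nsmul New _ _ h1
            _ ≤ T * B ^ (r-1) := by
                  apply Nat.mul_le_mul_right
                  calc New.card ≤ (((f α).support.erase α).image (fun u => η + u)).card :=
                        Finset.card_filter_le _ _
                    _ ≤ ((f α).support.erase α).card := Finset.card_image_le
                    _ ≤ (f α).support.card := Finset.card_erase_le
                    _ ≤ T := Finset.le_sup (f := fun α => (f α).support.card)
                        ((minBasis_finite hss hD).mem_toFinset.2 hα)
            _ < B ^ r := by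
                  have hpow : B ^ r = B ^ (r-1) * B := by
                    rw [← pow_succ]
                    congr 1
                    omega
                  have : (0:ℕ) < B ^ (r-1) := pow_pos (by omega) _
                  rw [hpow, hB]
                  rw [hB] at this
                  nlinarith
      have hPhi : Phi 𝔧 M B g₁ < Phi 𝔧 M B g := by
        have h1 : Phi 𝔧 M B g₁ ≤
            ∑ v ∈ ((g.support.filter (· ∈ 𝔧)).erase γ) ∪ New, B ^ rnk 𝔧 M v := by
          rw [Phi]
          apply Finset.sum_le_sum_of_subset
          convert hsub
        have h2 : ∑ v ∈ ((g.support.filter (· ∈ 𝔧)).erase γ) ∪ New, B ^ rnk 𝔧 M v ≤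
            (∑ v ∈ (g.support.filter (· ∈ 𝔧)).erase γ, B ^ rnk 𝔧 M v) +
            ∑ v ∈ New, B ^ rnk 𝔧 M v := by
          have := Finset.sum_union_inter (s₁ := (g.support.filter (· ∈ 𝔧)).erase γ)
            (s₂ := New) (f := fun v => B ^ rnk 𝔧 M v)
          omega
        have h3 : (∑ v ∈ (g.support.filter (· ∈ 𝔧)).erase γ, B ^ rnk 𝔧 M v) + B ^ r =
            Phi 𝔧 M B g := by
          rw [Phi, ← Finset.add_sum_erase _ _ hγF, ← hr]
          omega
        omega
      obtain ⟨g', hred', hrp'⟩ := ih g₁ (by omega)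
      exact ⟨g', Relation.ReflTransGen.head hstep hred', hrp'⟩

end NF

section Rep

variable {n : ℕ} {𝔧 : Set (Mon (n + 1))} {K : Type} [Field K]
  {f : Mon (n + 1) → MvPolynomial (Fin (n + 1)) K}

/-- bounded star-multiples -/
def SSpan (𝔧 : Set (Mon (n+1))) (f : Mon (n + 1) → MvPolynomial (Fin (n + 1)) K)
    (M N₀ : ℕ) : Set (MvPolynomial (Fin (n+1)) K) :=
  {p | ∃ β η : Mon (n+1), β ∈ MinBasis 𝔧 ∧ StarCond β η ∧ mu M η < N₀ ∧
    p = mono K η * f β}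

/-- all star-multiples -/
def SAll (𝔧 : Set (Mon (n+1))) (f : Mon (n + 1) → MvPolynomial (Fin (n + 1)) K) :
    Set (MvPolynomial (Fin (n+1)) K) :=
  {p | ∃ β η : Mon (n+1), β ∈ MinBasis 𝔧 ∧ StarCond β η ∧ p = mono K η * f β}

lemma sspan_le_sall (M N₀ : ℕ) :
    Submodule.span K (SSpan 𝔧 f M N₀) ≤ Submodule.span K (SAll 𝔧 f) := by
  apply Submodule.span_mono
  rintro p ⟨β, η, hβ, hstar, _, hp⟩
  exact ⟨β, η, hβ, hstar, hp⟩

lemma reduces_rep (hss : StronglyStable 𝔧) {D M : ℕ}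
    (hD : Finsupp.single 0 D ∈ 𝔧) (hDM : D ≤ M) (hm : MSet 𝔧 f)
    {N₀ : ℕ} {g g' : MvPolynomial (Fin (n+1)) K}
    (hred : Reduces K 𝔧 f g g')
    (hInv : ∀ γ ∈ g.support, γ ∈ 𝔧 → rnk 𝔧 M γ < N₀) :
    g - g' ∈ Submodule.span K (SSpan 𝔧 f M N₀) ∧
      ∀ γ ∈ g'.support, γ ∈ 𝔧 → rnk 𝔧 M γ < N₀ := by
  induction hred with
  | refl => exact ⟨by simp, hInv⟩
  | tail hab hbc ih =>
    rename_i b c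
    obtain ⟨hspan, hInvb⟩ := ih
    obtain ⟨γ, α, η, hγsup, hγ𝔧, hα, heq, hstar, hc⟩ := hbc
    have hrγ : rnk 𝔧 M γ = mu M η := rnk_eq hss hα heq hstar
    have hμη : mu M η < N₀ := by
      have := hInvb γ hγsup hγ𝔧
      omega
    have hbc' : b - c = MvPolynomial.coeff γ b • (mono K η * f α) := by
      rw [hc]; ring
    have hx : b - c ∈ Submodule.span K (SSpan 𝔧 f M N₀) := by
      rw [hbc']
      exact Submodule.smul_mem _ _
        (Submodule.subset_span ⟨α, η, hα, hstar, hμη, rfl⟩)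
    constructor
    · have : g - c = (g - b) + (b - c) := by ring
      rw [this]
      exact Submodule.add_mem _ hspan hx
    · intro v hvsup hv𝔧
      have hprops := rstep_props heq (hm α hα).1 hc
      obtain ⟨_, hvcase⟩ := hprops.2 v hvsup
      rcases hvcase with hvb | ⟨u, husup, hune, rfl⟩
      · exact hInvb v hvb hv𝔧
      · have hu𝔧 : u ∉ 𝔧 := (hm α hα).2 u husup hune
        obtain ⟨α'', η'', hα'', heq'', hstar''⟩ := decomp_exists hss hv𝔧
        rw [rnk_eq hss hα'' heq'' hstar'']
        have := descent hss hD hDM hu𝔧 hα''.1 heq'' hstar''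
        omega

lemma mono_mul_mem (hss : StronglyStable 𝔧) {D M : ℕ}
    (hD : Finsupp.single 0 D ∈ 𝔧) (hDM : D ≤ M) (hm : MSet 𝔧 f)
    (hdeg : ∀ α ∈ MinBasis 𝔧, mdeg α ≤ M)
    (hcrit : ∀ α ∈ MinBasis 𝔧, ∀ i : Fin (n + 1),
      (∃ j : Fin (n + 1), j < i ∧ α j ≠ 0) →
      Reduces K 𝔧 f (MvPolynomial.X i * f α) 0) :
    ∀ (δ β : Mon (n+1)), β ∈ MinBasis 𝔧 →
      mono K δ * f β ∈ Submodule.span K (SAll 𝔧 f) := by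
  intro δ
  generalize hkk : mu M δ = k
  induction k using Nat.strong_induction_on generalizing δ with
  | _ k ih =>
  intro β hβ
  by_cases hsc : StarCond β δ
  · exact Submodule.subset_span ⟨β, δ, hβ, hsc, rfl⟩
  · rw [StarCond] at hsc
    push_neg at hsc
    obtain ⟨i₀, j₀, hi₀, hj₀, hnle⟩ := hsc
    have hδ0 : δ ≠ 0 := by
      intro hc; rw [hc] at hj₀; simp at hj₀
    have hne : δ.support.Nonempty := Finsupp.support_nonempty_iff.2 hδ0
    set j := δ.support.max' hne with hj
    have hjsup : δ j ≠ 0 := Finsupp.mem_support_iff.1 (δ.support.max'_mem hne)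
    have hj₀j : j₀ ≤ j := δ.support.le_max' j₀ (Finsupp.mem_support_iff.2 hj₀)
    have hij : i₀ < j := lt_of_lt_of_le hnle hj₀j
    have hred0 : Reduces K 𝔧 f (MvPolynomial.X j * f β) 0 :=
      hcrit β hβ j ⟨i₀, hij, hi₀⟩
    -- initial rank bound
    have hInv : ∀ γ ∈ (MvPolynomial.X j * f β).support, γ ∈ 𝔧 →
        rnk 𝔧 M γ < (M + 1) ^ (j : ℕ) := by
      intro γ hγsup hγ𝔧
      rw [MvPolynomial.support_X_mul] at hγsup
      obtain ⟨w, hwsup, hwγ⟩ := Finset.mem_map.1 hγsup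
      have hγw : γ = Finsupp.single j 1 + w := by
        rw [← hwγ]; rfl
      have hw : w ∉ 𝔧 ∨ (w ∈ MinBasis 𝔧 ∧ ∃ j₁ : Fin (n+1), j₁ < j ∧ w j₁ ≠ 0) := by
        rcases eq_or_ne w β with rfl | hwβ
        · exact Or.inr ⟨hβ, i₀, hij, hi₀⟩
        · exact Or.inl ((hm β hβ).2 w hwsup hwβ)
      obtain ⟨α₁, η₁, hα₁, heq₁, hstar₁⟩ := decomp_exists hss hγ𝔧
      have hinit := init_decomp hss hw hα₁ (hγw ▸ heq₁) hstar₁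
      rw [rnk_eq hss hα₁ heq₁ hstar₁]
      apply mu_lt_pow M j hinit.1
      refine le_trans hinit.2 ?_
      rcases eq_or_ne w β with rfl | hwβ
      · exact hdeg w hβ
      · have := notmem_mdeg_lt hss hD ((hm β hβ).2 w hwsup hwβ)
        omega
    have hXmem : MvPolynomial.X j * f β ∈
        Submodule.span K (SSpan 𝔧 f M ((M + 1) ^ (j : ℕ))) := by
      have := (reduces_rep hss hD hDM hm hred0 hInv).1
      rwa [sub_zero] at this
    -- rewrite mono δ * f β
    set δ' : Mon (n+1) := δ - Finsupp.single j 1 with hδ'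
    have hδle : Finsupp.single j 1 ≤ δ := Finsupp.single_le_iff.2 (by omega)
    have hδeq : δ' + Finsupp.single j 1 = δ := tsub_add_cancel_of_le hδle
    have hXj : (MvPolynomial.X j : MvPolynomial (Fin (n+1)) K)
        = mono K (Finsupp.single j 1) := by
      rw [mono, MvPolynomial.X]
    have hsplit : mono K δ * f β = mono K δ' * (MvPolynomial.X j * f β) := by
      rw [hXj, ← mul_assoc, mono, mono, mono, MvPolynomial.monomial_mul, hδeq, one_mul]
    rw [hsplit]
    have hmap : mono K δ' * (MvPolynomial.X j * f β) ∈
        Submodule.map (LinearMap.mulLeft K (mono K δ'))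
          (Submodule.span K (SSpan 𝔧 f M ((M + 1) ^ (j : ℕ)))) :=
      ⟨_, hXmem, rfl⟩
    rw [Submodule.map_span] at hmap
    refine Submodule.span_le.2 ?_ hmap
    rintro p ⟨q, ⟨β', η', hβ', hstar', hμ', rfl⟩, rfl⟩
    have hform : (LinearMap.mulLeft K (mono K δ')) (mono K η' * f β')
        = mono K (δ' + η') * f β' := by
      simp only [LinearMap.mulLeft_apply]
      rw [← mul_assoc, mono, mono, mono, MvPolynomial.monomial_mul, one_mul]
    rw [hform]
    have hμlt : mu M (δ' + η') < k := by
      rw [mu_add]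
      have h1 : mu M δ' + mu M (Finsupp.single j 1) = mu M δ := by
        rw [← mu_add, hδeq]
      rw [mu_single, one_mul] at h1
      omega
    exact ih _ hμlt (δ' + η') rfl β' hβ'

end Rep

section Head

variable {n : ℕ} {𝔧 : Set (Mon (n + 1))} {K : Type} [Field K]
  {f : Mon (n + 1) → MvPolynomial (Fin (n + 1)) K}

lemma mul_sall (hss : StronglyStable 𝔧) {D M : ℕ}
    (hD : Finsupp.single 0 D ∈ 𝔧) (hDM : D ≤ M) (hm : MSet 𝔧 f)
    (hdeg : ∀ α ∈ MinBasis 𝔧, mdeg α ≤ M)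
    (hcrit : ∀ α ∈ MinBasis 𝔧, ∀ i : Fin (n + 1),
      (∃ j : Fin (n + 1), j < i ∧ α j ≠ 0) →
      Reduces K 𝔧 f (MvPolynomial.X i * f α) 0)
    (r : MvPolynomial (Fin (n+1)) K) (β η : Mon (n+1))
    (hβ : β ∈ MinBasis 𝔧) :
    r * (mono K η * f β) ∈ Submodule.span K (SAll 𝔧 f) := by
  induction r using MvPolynomial.induction_on' with
  | monomial u a =>
    have h1 : (MvPolynomial.monomial u a : MvPolynomial (Fin (n+1)) K)
        = a • mono K u := by
      simp only [mono]
      rw [MvPolynomial.smul_monomial, smul_eq_mul, mul_one]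
    rw [h1, smul_mul_assoc, ← mul_assoc]
    simp only [mono]
    rw [MvPolynomial.monomial_mul, one_mul]
    exact Submodule.smul_mem _ _
      (mono_mul_mem hss hD hDM hm hdeg hcrit (u + η) β hβ)
  | add p q hp hq =>
    rw [add_mul]
    exact Submodule.add_mem _ hp hq

lemma ideal_le_sall (hss : StronglyStable 𝔧) {D M : ℕ}
    (hD : Finsupp.single 0 D ∈ 𝔧) (hDM : D ≤ M) (hm : MSet 𝔧 f)
    (hdeg : ∀ α ∈ MinBasis 𝔧, mdeg α ≤ M)
    (hcrit : ∀ α ∈ MinBasis 𝔧, ∀ i : Fin (n + 1),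
      (∃ j : Fin (n + 1), j < i ∧ α j ≠ 0) →
      Reduces K 𝔧 f (MvPolynomial.X i * f α) 0)
    {h : MvPolynomial (Fin (n+1)) K} (hh : h ∈ idealG K 𝔧 f) :
    h ∈ Submodule.span K (SAll 𝔧 f) := by
  have hmul : ∀ (r x : MvPolynomial (Fin (n+1)) K),
      x ∈ Submodule.span K (SAll 𝔧 f) → r * x ∈ Submodule.span K (SAll 𝔧 f) := by
    intro r x hx
    have hmap : r * x ∈ Submodule.map (LinearMap.mulLeft K r)
        (Submodule.span K (SAll 𝔧 f)) := ⟨x, hx, rfl⟩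
    rw [Submodule.map_span] at hmap
    refine Submodule.span_le.2 ?_ hmap
    rintro p ⟨q, ⟨β, η, hβ, hstar, rfl⟩, rfl⟩
    simp only [LinearMap.mulLeft_apply]
    exact mul_sall hss hD hDM hm hdeg hcrit r β η hβ
  refine Submodule.span_induction ?_ ?_ ?_ ?_ hh
  · rintro x ⟨β, hβ, rfl⟩
    have := mono_mul_mem hss hD hDM hm hdeg hcrit 0 β hβ
    rwa [mono, MvPolynomial.monomial_zero', map_one, one_mul] at this
  · exact Submodule.zero_mem _
  · intro x y _ _ hx hy
    exact Submodule.add_mem _ hx hy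
  · intro r x _ hx
    rw [smul_eq_mul]
    exact hmul r x hx

lemma reduced_span_eq_zero (hss : StronglyStable 𝔧) {D M : ℕ}
    (hD : Finsupp.single 0 D ∈ 𝔧) (hDM : D ≤ M) (hm : MSet 𝔧 f)
    {h : MvPolynomial (Fin (n+1)) K}
    (hmem : h ∈ Submodule.span K (SAll 𝔧 f)) (hred : IsReducedPoly K 𝔧 h) :
    h = 0 := by
  classical
  obtain ⟨c, hcsupp, hcsum⟩ := Submodule.mem_span_set.1 hmem
  have hempty : c.support = ∅ := by
    by_contra hne
    have hnonempty := Finset.nonempty_of_ne_empty hne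
    have hpair : ∀ x : MvPolynomial (Fin (n+1)) K, x ∈ c.support →
        ∃ βη : Mon (n+1) × Mon (n+1), βη.1 ∈ MinBasis 𝔧 ∧ StarCond βη.1 βη.2 ∧
          x = mono K βη.2 * f βη.1 := by
      intro x hx
      obtain ⟨β, η, h1, h2, h3⟩ := hcsupp hx
      exact ⟨(β, η), h1, h2, h3⟩
    choose! P hP1 hP2 hP3 using hpair
    obtain ⟨x₀, hx₀, hmax⟩ :=
      Finset.exists_max_image c.support (fun x => mu M (P x).2) hnonempty
    set γs : Mon (n+1) := (P x₀).1 + (P x₀).2 with hγs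
    have hγ𝔧 : γs ∈ 𝔧 := hss.1 _ (hP1 x₀ hx₀).1 _
    have hco : MvPolynomial.coeff γs h = c x₀ := by
      rw [← hcsum, Finsupp.sum, MvPolynomial.coeff_sum]
      rw [Finset.sum_eq_single x₀]
      · have hc1 : MvPolynomial.coeff γs (mono K (P x₀).2 * f (P x₀).1) = 1 := by
          rw [hγs, add_comm ((P x₀).1), coeff_mono_mul, (hm _ (hP1 x₀ hx₀)).1]
        rw [MvPolynomial.coeff_smul, hP3 x₀ hx₀, hc1, smul_eq_mul, mul_one]
      · intro x hx hxne
        rw [MvPolynomial.coeff_smul, hP3 x hx]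
        have hz : MvPolynomial.coeff γs (mono K (P x).2 * f (P x).1) = 0 := by
          rw [mono, MvPolynomial.coeff_monomial_mul']
          split_ifs with hle
          · rw [one_mul]
            by_contra hc0
            set u : Mon (n+1) := γs - (P x).2 with hu
            have husup : u ∈ (f (P x).1).support := MvPolynomial.mem_support_iff.2 hc0
            have hueq : (P x).2 + u = γs := add_tsub_cancel_of_le hle
            rcases eq_or_ne u (P x).1 with huβ | huβ
            · have heqpair : (P x).1 + (P x).2 = (P x₀).1 + (P x₀).2 := by
                rw [← hγs, ← hueq, huβ]
                exact add_comm _ _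
              have huniq := decomp_unique hss (hP1 x hx) (hP1 x₀ hx₀) heqpair
                (hP2 x hx) (hP2 x₀ hx₀)
              apply hxne
              rw [hP3 x hx, hP3 x₀ hx₀, huniq.1, huniq.2]
            · have hu𝔧 : u ∉ 𝔧 := (hm _ (hP1 x hx)).2 u husup huβ
              have hdesc := descent hss hD hDM hu𝔧 (hP1 x₀ hx₀).1
                (hueq.trans hγs) (hP2 x₀ hx₀)
              have := hmax x hx
              omega
          · rfl
        rw [hz, smul_zero]
      · intro hc
        exact absurd hx₀ hc
    have hγsup : γs ∈ h.support := by
      rw [MvPolynomial.mem_support_iff, hco]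
      exact Finsupp.mem_support_iff.1 hx₀
    exact hred γs hγsup hγ𝔧
  have : c = 0 := Finsupp.support_eq_empty.1 hempty
  rw [← hcsum, this]
  simp

lemma mem_span_mono_support {A : Set (Mon (n+1))} {x : MvPolynomial (Fin (n+1)) K}
    (hx : x ∈ Submodule.span K (mono K '' A)) : ∀ u ∈ x.support, u ∈ A := by
  classical
  refine Submodule.span_induction ?_ ?_ ?_ ?_ hx
  · rintro p ⟨v, hv, rfl⟩ u hu
    rw [mono, MvPolynomial.support_monomial, if_neg (one_ne_zero)] at hu
    rwa [Finset.mem_singleton.1 hu]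
  · intro u hu; simp at hu
  · intro p q _ _ hp hq u hu
    rcases Finset.mem_union.1 (MvPolynomial.support_add hu) with h | h
    · exact hp u h
    · exact hq u h
  · intro a p _ hp u hu
    exact hp u (MvPolynomial.support_smul hu)

lemma mem_spanNLE {t : ℕ} {x : MvPolynomial (Fin (n+1)) K}
    (hx : ∀ u ∈ x.support, u ∉ 𝔧 ∧ mdeg u ≤ t) : x ∈ spanNLE K 𝔧 t := by
  rw [← MvPolynomial.support_sum_monomial_coeff x]
  apply Submodule.sum_mem
  intro u hu
  have : (MvPolynomial.monomial u (MvPolynomial.coeff u x) : MvPolynomial (Fin (n+1)) K)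
      = MvPolynomial.coeff u x • mono K u := by
    simp only [mono]
    rw [MvPolynomial.smul_monomial, smul_eq_mul, mul_one]
  rw [this]
  exact Submodule.smul_mem _ _ (Submodule.subset_span ⟨u, hx u hu, rfl⟩)

end Head

section Main

variable {n : ℕ} {𝔧 : Set (Mon (n + 1))} {K : Type} [Field K]
  {f : Mon (n + 1) → MvPolynomial (Fin (n + 1)) K}

lemma mem_degLE {t : ℕ} {x : MvPolynomial (Fin (n+1)) K} :
    x ∈ degLE K (n+1) t ↔ ∀ u ∈ x.support, mdeg u ≤ t := Iff.rfl

theorem artinian_markedBasis_criterion' (m : ℕ)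
    (hss : StronglyStable 𝔧) (hm : 0 < m)
    (hfin : {u : Mon (n + 1) | u ∉ 𝔧}.Finite)
    (hms : JmMarkedSet K 𝔧 m f) :
    (regC 𝔧 - 1 ≤ m →
      ∀ β ∈ 𝔧, ∃ gβ, Reduces K 𝔧 f (mono K β) gβ ∧
        ∀ u ∈ gβ.support, u ∉ 𝔧 ∧ mdeg u ≤ regC 𝔧 - 1) ∧
    (satC 𝔧 ≤ m →
      (JmMarkedBasis K 𝔧 (satC 𝔧 - 1) f ↔
        ∀ α ∈ MinBasis 𝔧, ∀ i : Fin (n + 1), (∃ j : Fin (n + 1), j < i ∧ α j ≠ 0) →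
          Reduces K 𝔧 f (MvPolynomial.X i * f α) 0)) := by
  classical
  obtain ⟨D, hD, hD'⟩ := exists_D hfin
  set M : ℕ := max m D with hM
  have hDM : D ≤ M := le_max_right _ _
  have hreg : regC 𝔧 = D := regC_eq hss hD hD'
  have hsat : satC 𝔧 = D := satC_eq hss hD hD'
  have hmset : MSet 𝔧 f := mset_of_jm hms
  have hdeg : ∀ α ∈ MinBasis 𝔧, mdeg α ≤ M :=
    fun α hα => (minBasis_mdeg_le hss hD hα).trans hDM
  constructor
  · -- Part 1
    intro _ β _
    obtain ⟨g', hred, hrp⟩ := exists_normal_form hss hD hDM hmset (mono K β)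
    refine ⟨g', hred, fun u hu => ⟨hrp u hu, ?_⟩⟩
    have := notmem_mdeg_lt hss hD (hrp u hu)
    rw [hreg]
    omega
  · -- Part 2
    intro hsatm
    rw [hsat] at hsatm ⊢
    constructor
    · -- basis → criterion
      intro hbasis α hα i hi
      obtain ⟨g', hred, hrp⟩ :=
        exists_normal_form hss hD hDM hmset (MvPolynomial.X i * f α)
      have hg'0 : g' = 0 := by
        have hXf : MvPolynomial.X i * f α ∈ idealG K 𝔧 f :=
          Ideal.mul_mem_left _ _ (Ideal.subset_span ⟨α, hα, rfl⟩)
        have hg'ideal : g' ∈ idealG K 𝔧 f := by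
          have h1 := reduces_sub_mem hred
          have h2 : g' = (MvPolynomial.X i * f α) - ((MvPolynomial.X i * f α) - g') := by
            ring
          rw [h2]
          exact Submodule.sub_mem _ hXf h1
        have hg'span : g' ∈ spanNLE K 𝔧 (D - 1) :=
          mem_spanNLE (fun u hu => ⟨hrp u hu, by
            have := notmem_mdeg_lt hss hD (hrp u hu); omega⟩)
        have hg'G : g' ∈ GleSub K 𝔧 f (D - 1) := by
          refine Submodule.mem_inf.2 ⟨?_, ?_⟩
          · exact hg'ideal
          · intro u hu
            have := notmem_mdeg_lt hss hD (hrp u hu)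
            omega
        have hdisj := (hbasis.2 (D - 1) le_rfl).1
        exact (Submodule.disjoint_def.1 hdisj) g' hg'span hg'G
      rw [hg'0] at hred
      exact hred
    · -- criterion → basis
      intro hcrit
      constructor
      · -- marked set at level D - 1
        intro α hα
        refine ⟨(hms α hα).1, fun u hu hne => ?_⟩
        have h1 := (hms α hα).2 u hu hne
        refine ⟨h1.1, ?_⟩
        have := notmem_mdeg_lt hss hD h1.1
        exact le_trans (by omega) (le_max_left _ _)
      · intro t ht
        have hdisj : Disjoint (spanNLE K 𝔧 t) (GleSub K 𝔧 f t) := by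
          rw [Submodule.disjoint_def]
          intro x hxN hxG
          have hxG' : x ∈ idealG K 𝔧 f := (Submodule.mem_inf.1 hxG).1
          have hxred : IsReducedPoly K 𝔧 x :=
            fun u hu => (mem_span_mono_support hxN u hu).1
          exact reduced_span_eq_zero hss hD hDM hmset
            (ideal_le_sall hss hD hDM hmset hdeg hcrit hxG') hxred
        refine ⟨hdisj, le_antisymm (sup_le ?_ ?_) ?_⟩
        · -- spanNLE ≤ degLE
          rw [spanNLE]
          refine Submodule.span_le.2 ?_
          rintro p ⟨u, ⟨_, hud⟩, rfl⟩
          intro v hv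
          rw [mono, MvPolynomial.support_monomial, if_neg one_ne_zero] at hv
          rwa [Finset.mem_singleton.1 hv]
        · exact inf_le_right
        · -- degLE ≤ sup
          intro g hg
          rw [← MvPolynomial.support_sum_monomial_coeff g]
          apply Submodule.sum_mem
          intro u hu
          have hdu : mdeg u ≤ t := hg u hu
          have hmonu : (MvPolynomial.monomial u (MvPolynomial.coeff u g) :
              MvPolynomial (Fin (n+1)) K) = MvPolynomial.coeff u g • mono K u := by
            simp only [mono]
            rw [MvPolynomial.smul_monomial, smul_eq_mul, mul_one]
          rw [hmonu]
          apply Submodule.smul_mem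
          by_cases hu𝔧 : u ∈ 𝔧
          · obtain ⟨g', hred, hrp⟩ := exists_normal_form hss hD hDM hmset (mono K u)
            have hsplit : mono K u = (mono K u - g') + g' := by ring
            rw [hsplit]
            apply Submodule.add_mem
            · apply Submodule.mem_sup_right
              refine Submodule.mem_inf.2 ⟨reduces_sub_mem hred, ?_⟩
              intro v hv
              rcases Finset.mem_union.1 (MvPolynomial.support_sub _ _ _ hv) with h | h
              · rw [mono, MvPolynomial.support_monomial, if_neg one_ne_zero] at h
                rw [Finset.mem_singleton.1 h]
                exact hdu
              · have := notmem_mdeg_lt hss hD (hrp v h)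
                omega
            · apply Submodule.mem_sup_left
              refine mem_spanNLE (fun v hv => ⟨hrp v hv, ?_⟩)
              have := notmem_mdeg_lt hss hD (hrp v hv)
              omega
          · apply Submodule.mem_sup_left
            refine mem_spanNLE (fun v hv => ?_)
            rw [mono, MvPolynomial.support_monomial, if_neg one_ne_zero] at hv
            rw [Finset.mem_singleton.1 hv]
            exact ⟨hu𝔧, hdu⟩

end Main

/-- for an Artinian strongly stable `𝔧` (finite sous-escalier)
and a `[𝔧,m]`-marked set `𝔊` with `m ≥ reg(𝔧) - 1`, every monomial of `𝔧`
reduces to a polynomial supported in `N(𝔧)_{≤ reg(𝔧)-1}`; consequently, for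
`m ≥ sat(𝔧)`, `𝔊` is a `[𝔧, sat(𝔧)-1]`-marked basis iff `x_i f_α` reduces to
`0` for all `f_α ∈ 𝔊` and all `x_i > min(x^α)`. -/
theorem artinian_markedBasis_criterion {n : ℕ} (K : Type) [Field K]
    (𝔧 : Set (Mon (n + 1))) (m : ℕ) (f : Mon (n + 1) → MvPolynomial (Fin (n + 1)) K)
    (hss : StronglyStable 𝔧) (hm : 0 < m)
    (hfin : {u : Mon (n + 1) | u ∉ 𝔧}.Finite)
    (hms : JmMarkedSet K 𝔧 m f) :
    (regC 𝔧 - 1 ≤ m →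
      ∀ β ∈ 𝔧, ∃ gβ, Reduces K 𝔧 f (mono K β) gβ ∧
        ∀ u ∈ gβ.support, u ∉ 𝔧 ∧ mdeg u ≤ regC 𝔧 - 1) ∧
    (satC 𝔧 ≤ m →
      (JmMarkedBasis K 𝔧 (satC 𝔧 - 1) f ↔
        ∀ α ∈ MinBasis 𝔧, ∀ i : Fin (n + 1), (∃ j : Fin (n + 1), j < i ∧ α j ≠ 0) →
          Reduces K 𝔧 f (MvPolynomial.X i * f α) 0)) := by
  exact artinian_markedBasis_criterion' m hss hm hfin hms

end Paper
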